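/- For every real ω with 1 < ω ≤ π/2 and all reals θ, γ with 0 ≤ θ ≤ γ ≤ π/2, one has min(2·ω·cos θ, π − 2θ) ≤ 2·(ω·cos γ + γ − θ). -/

import Mathlib

open Real

theorem min_chord_arc_le_bending (ω θ γ : ℝ) (hω1 : 1 < ω) (hω2 : ω ≤ π / 2)
    (hθ0 : 0 ≤ θ) (hθγ : θ ≤ γ) (hγ : γ ≤ π / 2) :
    min (2 * ω * Real.cos θ) (π - 2 * θ) ≤ 2 * (ω * Real.cos γ + γ - θ) := by
  have hconc : ConcaveOn ℝ (Set.Icc (-(π/2)) (π/2)) (fun x => ω * Real.cos x + x) := by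
    have h1 : ConcaveOn ℝ (Set.Icc (-(π/2)) (π/2)) (fun x => ω * Real.cos x) := by
      simpa [smul_eq_mul] using
        (strictConcaveOn_cos_Icc.concaveOn.smul (le_of_lt (lt_trans one_pos hω1)))
    exact h1.add (concaveOn_id (convex_Icc _ _))
  have hθmem : θ ∈ Set.Icc (-(π/2)) (π/2) := ⟨by linarith [pi_pos], by linarith⟩
  have hpmem : (π/2) ∈ Set.Icc (-(π/2)) (π/2) := ⟨by linarith [pi_pos], le_refl _⟩
  have key := hconc.min_le_of_mem_Icc hθmem hpmem ⟨hθγ, hγ⟩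
  have hcos : Real.cos (π/2) = 0 := Real.cos_pi_div_two
  simp only [hcos, mul_zero, zero_add] at key
  rcases le_or_gt (ω * Real.cos θ + θ) (π/2) with h | h
  · have : min (ω * Real.cos θ + θ) (π/2) = ω * Real.cos θ + θ := min_eq_left h
    rw [this] at key
    calc min (2 * ω * Real.cos θ) (π - 2 * θ) ≤ 2 * ω * Real.cos θ := min_le_left _ _
      _ ≤ 2 * (ω * Real.cos γ + γ - θ) := by linarith
  · have : min (ω * Real.cos θ + θ) (π/2) = π/2 := min_eq_right h.le
    rw [this] at key
    calc min (2 * ω * Real.cos θ) (π - 2 * θ) ≤ π - 2 * θ := min_le_right _ _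
      _ ≤ 2 * (ω * Real.cos γ + γ - θ) := by linarith
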